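/- Let s : [0, ∞) → [0, 1] be nonincreasing and continuous with A_s = ∫₀^∞ s(t) dt < ∞, B_s = A_s/2, H_s(x) = x·s(x) + ∫_x^∞ s(t) dt, and suppose additionally there exists t₀ ≥ 0 with s(t) = 1 for t ∈ [0, t₀] and s strictly decreasing on [t₀, ∞), and that the solution a of H_s(a) = B_s satisfies a > t₀; set p₀ = s(a). Define F⋆(x) = 0 for x ≤ −a, F⋆(x) = s(−x) − p₀ for −a < x ≤ −t₀, F⋆(x) = 1 − p₀ for −t₀ < x < a, and F⋆(x) = 1 − s(x) for x ≥ a. Then F⋆ is a cumulative distribution function, and the random variable X⋆ with distribution function F⋆ satisfies: P(|X⋆| > t) = s(t) for all t ≥ 0, E[X⋆] = 0, and E[(X⋆ − u)₊] = J_s(u) for all u ≥ 0, where J_s(u) = B_s − p₀·u for 0 ≤ u ≤ a and J_s(u) = ∫_u^∞ s(t) dt for u ≥ a. -/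

import Mathlib

open MeasureTheory Set Filter Topology ENNReal

private lemma shift_int (f : ℝ → ℝ) (u c : ℝ) :
    (∫ t in Set.Ioi (c - u), f (u + t)) = ∫ t in Set.Ioi c, f t := by
  have hpre : (fun x : ℝ => u + x) ⁻¹' (Set.Ioi c) = Set.Ioi (c - u) := by
    ext x
    simp only [Set.mem_preimage, Set.mem_Ioi]
    constructor <;> intro h <;> linarith
  have h := (measurePreserving_add_left (volume : Measure ℝ) u).setIntegral_preimage_emb
    (measurableEmbedding_addLeft u) f (Set.Ioi c)
  rw [hpre] at h
  exact h

private lemma shift_intOn (f : ℝ → ℝ) (u c : ℝ) (hf : IntegrableOn f (Set.Ioi c)) :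
    IntegrableOn (fun t => f (u + t)) (Set.Ioi (c - u)) := by
  have hpre : (fun x : ℝ => u + x) ⁻¹' (Set.Ioi c) = Set.Ioi (c - u) := by
    ext x
    simp only [Set.mem_preimage, Set.mem_Ioi]
    constructor <;> intro h <;> linarith
  have h := ((measurePreserving_add_left (volume : Measure ℝ) u).restrict_preimage
      (measurableSet_Ioi (a := c))).integrable_comp_emb (measurableEmbedding_addLeft u) (g := f)
  rw [hpre] at h
  exact h.mpr hf


/-- Extremizer attaining the stop-loss envelope: in the setting of the sharp stop-loss
envelope (`s : [0,∞) → [0,1]` nonincreasing, continuous, integrable, with `s ≡ 1` on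
`[0, t₀]` and strictly decreasing on `[t₀, ∞)`, and `a > t₀` solving
`H_s(a) = B_s = (∫₀^∞ s)/2`, `p₀ = s(a)`), the function
`F⋆(x) = 0` for `x ≤ −a`, `s(−x) − p₀` for `−a < x ≤ −t₀`, `1 − p₀` for `−t₀ < x < a`,
`1 − s(x)` for `x ≥ a`, is a cumulative distribution function: there is a probability
measure `ν` on `ℝ` with `ν(−∞, x] = F⋆(x)` for all `x`; moreover the random variable `X⋆`
with law `ν` is integrable and satisfies `P(|X⋆| > t) = s(t)` for all `t ≥ 0`,
`E[X⋆] = 0`, and `E[(X⋆ − u)₊] = J_s(u)` for all `u ≥ 0`. -/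
theorem stmt6
    (s : ℝ → ℝ)
    (hs01 : ∀ t ∈ Set.Ici (0 : ℝ), s t ∈ Set.Icc (0 : ℝ) 1)
    (hmono : AntitoneOn s (Set.Ici 0))
    (hcont : ContinuousOn s (Set.Ici 0))
    (hint : IntegrableOn s (Set.Ioi 0))
    (t₀ : ℝ) (ht₀ : 0 ≤ t₀)
    (hone : ∀ t ∈ Set.Icc 0 t₀, s t = 1)
    (hstrict : StrictAntiOn s (Set.Ici t₀))
    (a : ℝ) (ha : t₀ < a)
    (hHa : a * s a + ∫ t in Set.Ioi a, s t = (∫ t in Set.Ioi (0 : ℝ), s t) / 2) :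
    ∃ ν : Measure ℝ, IsProbabilityMeasure ν ∧
      (∀ x : ℝ, (ν (Set.Iic x)).toReal =
        if x ≤ -a then 0
        else if x ≤ -t₀ then s (-x) - s a
        else if x < a then 1 - s a
        else 1 - s x) ∧
      Integrable (fun x => x) ν ∧
      (∀ t : ℝ, 0 ≤ t → (ν {x | t < |x|}).toReal = s t) ∧
      (∫ x, x ∂ν) = 0 ∧
      (∀ u : ℝ, 0 ≤ u →
        (∫ x, max (x - u) 0 ∂ν) =
          if u ≤ a then (∫ t in Set.Ioi (0 : ℝ), s t) / 2 - s a * u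
          else ∫ t in Set.Ioi u, s t) := by

  have hs0 : s 0 = 1 := hone 0 ⟨le_refl 0, ht₀⟩
  have ha0 : (0:ℝ) < a := lt_of_le_of_lt ht₀ ha
  -- s tends to 0 at infinity
  have hstop : Tendsto s atTop (𝓝 0) := by
    rw [Metric.tendsto_atTop]
    by_contra hcon
    push_neg at hcon
    obtain ⟨ε, hε, hN⟩ := hcon
    have hge : ∀ y : ℝ, 0 ≤ y → ε ≤ s y := by
      intro y hy
      obtain ⟨x, hx1, hx2⟩ := hN (max y 0)
      have hx0 : (0:ℝ) ≤ x := le_trans (le_max_right _ _) hx1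
      have hyx : y ≤ x := le_trans (le_max_left _ _) hx1
      have := hmono hy hx0 hyx
      rw [Real.dist_eq, sub_zero, abs_of_nonneg (hs01 x hx0).1] at hx2
      linarith
    have hci : IntegrableOn (fun _ : ℝ => ε) (Set.Ioi 0) := by
      refine Integrable.mono' hint aestronglyMeasurable_const ?_
      rw [ae_restrict_iff' measurableSet_Ioi]
      exact Eventually.of_forall fun t ht =>
        by rw [Real.norm_eq_abs, abs_of_nonneg hε.le]; exact hge t ht.le
    rcases (integrableOn_const_iff (C := ε)).mp hci with h | h
    · exact hε.ne' (enorm_eq_zero.mp h)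
    · simpa [Real.volume_Ioi] using h.ne
  -- the CDF of |X|
  have hGc : Continuous (fun x : ℝ => 1 - s (max x 0)) := by
    have h1 : Continuous fun x : ℝ => max x 0 := continuous_id.max continuous_const
    exact continuous_const.sub
      (hcont.comp_continuous h1 fun x => Set.mem_Ici.mpr (le_max_right x 0))
  set G : StieltjesFunction ℝ :=
    { toFun := fun x => 1 - s (max x 0)
      mono' := by
        intro x y hxy
        have hm : max x 0 ≤ max y 0 := max_le_max hxy le_rfl
        have := hmono (Set.mem_Ici.mpr (le_max_right x 0)) (Set.mem_Ici.mpr (le_max_right y 0)) hm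
        simp only
        linarith
      right_continuous' := fun x => hGc.continuousAt.continuousWithinAt } with hGdef
  have hGneg : ∀ x : ℝ, x ≤ 0 → G x = 0 := by
    intro x hx
    show 1 - s (max x 0) = 0
    rw [max_eq_right hx, hs0]; ring
  have hGpos : ∀ x : ℝ, 0 ≤ x → G x = 1 - s x := by
    intro x hx
    show 1 - s (max x 0) = 1 - s x
    rw [max_eq_left hx]
  have hbot : Tendsto G atBot (𝓝 0) := by
    refine tendsto_const_nhds.congr' ?_
    filter_upwards [eventually_le_atBot (0:ℝ)] with x hx
    exact (hGneg x hx).symm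
  have htop : Tendsto G atTop (𝓝 1) := by
    have h1 : Tendsto (fun x : ℝ => 1 - s x) atTop (𝓝 (1 - 0)) :=
      tendsto_const_nhds.sub hstop
    rw [sub_zero] at h1
    refine h1.congr' ?_
    filter_upwards [eventually_ge_atTop (0:ℝ)] with x hx
    exact (hGpos x hx).symm
  have hleft : ∀ x, Function.leftLim G x = G x := fun x =>
    leftLim_eq_of_tendsto
      ((hGc.tendsto x).mono_left nhdsWithin_le_nhds)
  set μ := G.measure with hμdef
  haveI hμprob : IsProbabilityMeasure μ := G.isProbabilityMeasure hbot htop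
  have hIic : ∀ x, μ (Set.Iic x) = ENNReal.ofReal (G x) := by
    intro x; rw [G.measure_Iic hbot, sub_zero]
  have hIciS : ∀ x, 0 ≤ x → μ (Set.Ici x) = ENNReal.ofReal (s x) := by
    intro x hx
    rw [G.measure_Ici htop, hleft, hGpos x hx]
    congr 1; ring
  have hIoiS : ∀ x, 0 ≤ x → μ (Set.Ioi x) = ENNReal.ofReal (s x) := by
    intro x hx
    rw [← Set.compl_Iic, measure_compl measurableSet_Iic (measure_ne_top μ _),
      measure_univ, hIic, hGpos x hx]
    rw [show (1:ℝ≥0∞) = ENNReal.ofReal 1 from ENNReal.ofReal_one.symm,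
      ← ENNReal.ofReal_sub 1 (by linarith [(hs01 x hx).2] : (0:ℝ) ≤ 1 - s x)]
    congr 1; ring
  have hIio0 : μ (Set.Iio 0) = 0 := by
    have h0 : μ (Set.Iic 0) = 0 := by
      rw [hIic, hGneg 0 le_rfl, ENNReal.ofReal_zero]
    exact le_antisymm (h0 ▸ measure_mono Set.Iio_subset_Iic_self) (by simp)
  have hnull : ∀ S S' : Set ℝ, S ∩ Set.Ici 0 = S' ∩ Set.Ici 0 → μ S = μ S' := by
    have key : ∀ S S' : Set ℝ, S ∩ Set.Ici 0 = S' ∩ Set.Ici 0 → μ S ≤ μ S' := by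
      intro S S' h
      calc μ S ≤ μ (S ∩ Set.Ici 0 ∪ Set.Iio 0) := measure_mono (by
            intro x hx
            rcases lt_or_ge x 0 with h0 | h0
            · exact Or.inr h0
            · exact Or.inl ⟨hx, h0⟩)
        _ ≤ μ (S ∩ Set.Ici 0) + μ (Set.Iio 0) := measure_union_le _ _
        _ = μ (S' ∩ Set.Ici 0) := by rw [h, hIio0, add_zero]
        _ ≤ μ S' := measure_mono Set.inter_subset_left
    exact fun S S' h => le_antisymm (key S S' h) (key S' S h.symm)
  -- the extremal random variable as a function of |X|
  set φ : ℝ → ℝ := fun t => if t < a then -t else t with hφdef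
  have hφm : Measurable φ := Measurable.ite measurableSet_Iio measurable_neg measurable_id
  have habsφ : ∀ T, |φ T| = |T| := by
    intro T
    by_cases h : T < a
    · simp [hφdef, h, abs_neg]
    · simp [hφdef, h]
  have htailabs : ∀ t, 0 ≤ t → μ {T | t < |φ T|} = ENNReal.ofReal (s t) := by
    intro t ht
    have h1 : {T | t < |φ T|} ∩ Set.Ici 0 = Set.Ioi t ∩ Set.Ici 0 := by
      ext T
      simp only [Set.mem_inter_iff, Set.mem_setOf_eq, Set.mem_Ici, Set.mem_Ioi, habsφ]
      constructor
      · rintro ⟨h2, h3⟩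
        exact ⟨by rwa [abs_of_nonneg h3] at h2, h3⟩
      · rintro ⟨h2, h3⟩
        exact ⟨by rwa [abs_of_nonneg h3], h3⟩
    rw [hnull _ _ h1, hIoiS t ht]
  have hsnn : 0 ≤ᵐ[volume.restrict (Set.Ioi (0:ℝ))] s :=
    (ae_restrict_iff' measurableSet_Ioi).mpr
      (Eventually.of_forall fun t ht => (hs01 t (Set.mem_Ici.mpr (le_of_lt ht))).1)
  have hφint : Integrable φ μ := by
    refine ⟨hφm.aestronglyMeasurable, ?_⟩
    rw [hasFiniteIntegral_iff_norm]
    have h1 : ∫⁻ T, ENNReal.ofReal ‖φ T‖ ∂μ = ∫⁻ t in Set.Ioi 0, μ {T | t < ‖φ T‖} :=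
      lintegral_eq_lintegral_meas_lt μ (Eventually.of_forall fun T => norm_nonneg _)
        hφm.norm.aemeasurable
    rw [h1]
    have h2 : ∫⁻ t in Set.Ioi 0, μ {T | t < ‖φ T‖} = ∫⁻ t in Set.Ioi 0, ENNReal.ofReal (s t) := by
      refine setLIntegral_congr_fun measurableSet_Ioi (fun t ht => ?_)
      simpa [Real.norm_eq_abs] using htailabs t (le_of_lt ht)
    rw [h2, ← ofReal_integral_eq_lintegral_ofReal hint hsnn]
    exact ENNReal.ofReal_lt_top
  have htail : ∀ c, 0 < c → μ {T | c < φ T} = ENNReal.ofReal (s (max c a)) := by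
    intro c hc
    rcases le_or_gt a c with hac | hac
    · have h1 : {T | c < φ T} ∩ Set.Ici 0 = Set.Ioi c ∩ Set.Ici 0 := by
        ext T
        simp only [Set.mem_inter_iff, Set.mem_setOf_eq, Set.mem_Ioi, Set.mem_Ici]
        constructor
        · rintro ⟨h2, h3⟩
          refine ⟨?_, h3⟩
          by_cases h4 : T < a
          · rw [hφdef] at h2; simp only [if_pos h4] at h2; linarith
          · rw [hφdef] at h2; simpa only [if_neg h4] using h2
        · rintro ⟨h2, h3⟩
          have h4 : ¬ T < a := by linarith
          refine ⟨?_, h3⟩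
          rw [hφdef]; simpa only [if_neg h4] using h2
      rw [hnull _ _ h1, hIoiS c (le_of_lt hc), max_eq_left hac]
    · have h1 : {T | c < φ T} ∩ Set.Ici 0 = Set.Ici a ∩ Set.Ici 0 := by
        ext T
        simp only [Set.mem_inter_iff, Set.mem_setOf_eq, Set.mem_Ici]
        constructor
        · rintro ⟨h2, h3⟩
          by_cases h4 : T < a
          · rw [hφdef] at h2; simp only [if_pos h4] at h2
            constructor <;> linarith
          · exact ⟨le_of_not_gt h4, h3⟩
        · rintro ⟨h2, h3⟩
          have h4 : ¬ T < a := not_lt.mpr h2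
          refine ⟨?_, h3⟩
          rw [hφdef]; simp only [if_neg h4]; linarith
      rw [hnull _ _ h1, hIciS a ha0.le, max_eq_right hac.le]
  -- the stop-loss transform
  have hSL : ∀ u, 0 ≤ u → (∫ x, max (x - u) 0 ∂(μ.map φ)) =
      ∫ t in Set.Ioi (0:ℝ), s (max (u + t) a) := by
    intro u hu
    have hcontf : Continuous fun x : ℝ => max (x - u) 0 :=
      (continuous_id.sub continuous_const).max continuous_const
    rw [integral_map hφm.aemeasurable hcontf.aestronglyMeasurable]
    have hgint : Integrable (fun T => max (φ T - u) 0) μ := by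
      refine Integrable.mono' hφint.abs
        ((hφm.sub measurable_const).max measurable_const).aestronglyMeasurable
        (Eventually.of_forall fun T => ?_)
      rw [Real.norm_eq_abs, abs_of_nonneg (le_max_right _ _)]
      refine max_le ?_ (abs_nonneg _)
      calc φ T - u ≤ φ T := by linarith
        _ ≤ |φ T| := le_abs_self _
    rw [hgint.integral_eq_integral_meas_lt (Eventually.of_forall fun T => le_max_right _ _)]
    refine setIntegral_congr_fun measurableSet_Ioi (fun t ht => ?_)
    have ht' : (0:ℝ) < t := ht
    have hset : {T | t < max (φ T - u) 0} = {T | u + t < φ T} := by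
      ext T
      simp only [Set.mem_setOf_eq, lt_max_iff]
      constructor
      · rintro (h | h)
        · linarith
        · linarith
      · intro h; left; linarith
    rw [hset, measureReal_def, htail (u + t) (by linarith)]
    rw [ENNReal.toReal_ofReal (hs01 _ (le_trans ha0.le (le_max_right _ _))).1]
  have hval1 : ∀ u, a ≤ u → (∫ t in Set.Ioi (0:ℝ), s (max (u + t) a)) = ∫ t in Set.Ioi u, s t := by
    intro u hau
    rw [setIntegral_congr_fun measurableSet_Ioi
      (fun t ht => by
        show s (max (u + t) a) = s (u + t)
        rw [max_eq_left (by have : (0:ℝ) < t := ht; linarith)] :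
        EqOn (fun t => s (max (u + t) a)) (fun t => s (u + t)) (Set.Ioi 0))]
    have h := shift_int s u u
    simpa [sub_self] using h
  have hval2 : ∀ u, 0 ≤ u → u ≤ a →
      (∫ t in Set.Ioi (0:ℝ), s (max (u + t) a)) =
        (∫ t in Set.Ioi (0:ℝ), s t) / 2 - s a * u := by
    intro u hu hua
    have hsIa : IntegrableOn s (Set.Ioi a) := hint.mono_set (Set.Ioi_subset_Ioi ha0.le)
    have hshift := shift_int s u a
    have hshiftInt : IntegrableOn (fun t => s (u + t)) (Set.Ioi (a - u)) :=
      shift_intOn s u a hsIa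
    have hsplit : Set.Ioc 0 (a - u) ∪ Set.Ioi (a - u) = Set.Ioi 0 :=
      Set.Ioc_union_Ioi_eq_Ioi (by linarith)
    have hEq1 : EqOn (fun _ : ℝ => s a) (fun t => s (max (u + t) a)) (Set.Ioc 0 (a - u)) := by
      intro t ht
      simp only
      rw [max_eq_right (by obtain ⟨h1, h2⟩ := ht; linarith)]
    have hEq2 : EqOn (fun t : ℝ => s (u + t)) (fun t => s (max (u + t) a)) (Set.Ioi (a - u)) := by
      intro t ht
      simp only
      rw [max_eq_left (by have : a - u < t := ht; linarith)]
    have hi1 : IntegrableOn (fun t => s (max (u + t) a)) (Set.Ioc 0 (a - u)) :=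
      (integrableOn_const measure_Ioc_lt_top.ne).congr_fun hEq1 measurableSet_Ioc
    have hi2 : IntegrableOn (fun t => s (max (u + t) a)) (Set.Ioi (a - u)) :=
      hshiftInt.congr_fun hEq2 measurableSet_Ioi
    have hbig : (∫ t in Set.Ioi (0:ℝ), s (max (u + t) a)) =
        (a - u) * s a + ∫ t in Set.Ioi a, s t := by
      rw [← hsplit, setIntegral_union (Set.Ioc_disjoint_Ioi le_rfl) measurableSet_Ioi hi1 hi2,
        ← setIntegral_congr_fun measurableSet_Ioc hEq1,
        ← setIntegral_congr_fun measurableSet_Ioi hEq2,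
        hshift, setIntegral_const, Real.volume_real_Ioc_of_le (by linarith),
        smul_eq_mul, sub_zero]
    rw [hbig]
    linarith [hHa]
  -- integrability of the identity
  have hXint : Integrable (fun x : ℝ => x) (μ.map φ) := by
    exact (integrable_map_measure aestronglyMeasurable_id hφm.aemeasurable).mpr hφint
  -- positive and negative parts
  have hpos : Integrable (fun T => max (φ T) 0) μ := by
    refine Integrable.mono' hφint.abs (hφm.max measurable_const).aestronglyMeasurable
      (Eventually.of_forall fun T => ?_)
    rw [Real.norm_eq_abs, abs_of_nonneg (le_max_right _ _)]
    exact max_le (le_abs_self _) (abs_nonneg _)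
  have hneg : Integrable (fun T => max (-φ T) 0) μ := by
    refine Integrable.mono' hφint.abs (hφm.neg.max measurable_const).aestronglyMeasurable
      (Eventually.of_forall fun T => ?_)
    rw [Real.norm_eq_abs, abs_of_nonneg (le_max_right _ _)]
    exact max_le (neg_le_abs _) (abs_nonneg _)
  have hEpos : (∫ T, max (φ T) 0 ∂μ) = (∫ t in Set.Ioi (0:ℝ), s t) / 2 := by
    have h0 : (∫ x, max (x - 0) 0 ∂(μ.map φ)) = ∫ T, max (φ T) 0 ∂μ := by
      have hmble : AEStronglyMeasurable (fun x : ℝ => max (x - 0) 0) (μ.map φ) :=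
        (((continuous_sub_right (0:ℝ)).max continuous_const)).aestronglyMeasurable
      rw [integral_map hφm.aemeasurable hmble]
      simp only [sub_zero]
    rw [← h0, hSL 0 le_rfl, hval2 0 le_rfl ha0.le, mul_zero, sub_zero]
  have hEneg : (∫ T, max (-φ T) 0 ∂μ) = (∫ t in Set.Ioi (0:ℝ), s t) / 2 := by
    rw [hneg.integral_eq_integral_meas_lt (Eventually.of_forall fun T => le_max_right _ _)]
    simp only [measureReal_def]
    have htneg : ∀ t : ℝ, 0 < t →
        μ {T | t < max (-φ T) 0} = ENNReal.ofReal (s t - s a) := by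
      intro t ht
      have hset : {T | t < max (-φ T) 0} = {T | φ T < -t} := by
        ext T
        simp only [Set.mem_setOf_eq, lt_max_iff]
        constructor
        · rintro (h | h)
          · linarith
          · linarith
        · intro h; left; linarith
      have h1 : {T | φ T < -t} ∩ Set.Ici 0 = Set.Ioo t a ∩ Set.Ici 0 := by
        ext T
        simp only [Set.mem_inter_iff, Set.mem_setOf_eq, Set.mem_Ioo, Set.mem_Ici]
        constructor
        · rintro ⟨h2, h3⟩
          by_cases h4 : T < a
          · rw [hφdef] at h2; simp only [if_pos h4] at h2
            exact ⟨⟨by linarith, h4⟩, h3⟩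
          · rw [hφdef] at h2; simp only [if_neg h4] at h2
            exact False.elim (by linarith)
        · rintro ⟨⟨h2, h4⟩, h3⟩
          refine ⟨?_, h3⟩
          rw [hφdef]; simp only [if_pos h4]; linarith
      rw [hset, hnull _ _ h1, hμdef, StieltjesFunction.measure_Ioo, hleft,
        hGpos a ha0.le, hGpos t ht.le]
      congr 1; ring
    have hsIa : IntegrableOn s (Set.Ioi a) := hint.mono_set (Set.Ioi_subset_Ioi ha0.le)
    have hsIoc : IntegrableOn s (Set.Ioc 0 a) := hint.mono_set Set.Ioc_subset_Ioi_self
    have hsplit : Set.Ioc 0 a ∪ Set.Ioi a = Set.Ioi 0 := Set.Ioc_union_Ioi_eq_Ioi ha0.le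
    have hEq1 : EqOn (fun t : ℝ => s t - s a)
        (fun t => (μ {T | t < max (-φ T) 0}).toReal) (Set.Ioc 0 a) := by
      rintro t ⟨ht1, ht2⟩
      simp only
      rw [htneg t ht1, ENNReal.toReal_ofReal (by
        have := hmono (Set.mem_Ici.mpr ht1.le) (Set.mem_Ici.mpr ha0.le) ht2
        linarith)]
    have hEq2 : EqOn (fun _ : ℝ => (0:ℝ))
        (fun t => (μ {T | t < max (-φ T) 0}).toReal) (Set.Ioi a) := by
      intro t ht
      have ht' : a < t := ht
      simp only
      rw [htneg t (by linarith), ENNReal.ofReal_eq_zero.mpr (by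
        have := hmono (Set.mem_Ici.mpr ha0.le) (Set.mem_Ici.mpr (by linarith : (0:ℝ) ≤ t)) ht'.le
        linarith)]
      simp
    have hbase : IntegrableOn (fun t : ℝ => s t - s a) (Set.Ioc 0 a) :=
      hsIoc.sub (integrableOn_const measure_Ioc_lt_top.ne)
    have hi1 : IntegrableOn (fun t => (μ {T | t < max (-φ T) 0}).toReal) (Set.Ioc 0 a) :=
      hbase.congr_fun hEq1 measurableSet_Ioc
    have hi2 : IntegrableOn (fun t => (μ {T | t < max (-φ T) 0}).toReal) (Set.Ioi a) :=
      integrableOn_zero.congr_fun hEq2 measurableSet_Ioi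
    have hIocInt : (∫ t in Set.Ioc (0:ℝ) a, s t) + (∫ t in Set.Ioi a, s t)
        = ∫ t in Set.Ioi (0:ℝ), s t := by
      rw [← setIntegral_union (Set.Ioc_disjoint_Ioi le_rfl) measurableSet_Ioi hsIoc hsIa, hsplit]
    calc ∫ t in Set.Ioi (0:ℝ), (μ {T | t < max (-φ T) 0}).toReal
        = (∫ t in Set.Ioc (0:ℝ) a, (μ {T | t < max (-φ T) 0}).toReal)
          + ∫ t in Set.Ioi a, (μ {T | t < max (-φ T) 0}).toReal := by
          rw [← hsplit, setIntegral_union (Set.Ioc_disjoint_Ioi le_rfl) measurableSet_Ioi hi1 hi2]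
      _ = (∫ t in Set.Ioc (0:ℝ) a, (s t - s a)) + 0 := by
          rw [← setIntegral_congr_fun measurableSet_Ioc hEq1,
            ← setIntegral_congr_fun measurableSet_Ioi hEq2]
          simp
      _ = (∫ t in Set.Ioc (0:ℝ) a, s t) - a * s a := by
          rw [add_zero, integral_sub hsIoc (integrableOn_const measure_Ioc_lt_top.ne),
            setIntegral_const, Real.volume_real_Ioc_of_le ha0.le, sub_zero,
            smul_eq_mul]
      _ = (∫ t in Set.Ioi (0:ℝ), s t) / 2 := by linarith [hHa, hIocInt]
  have hmean : (∫ x, x ∂(μ.map φ)) = 0 := by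
    have h0 : (∫ x, x ∂(μ.map φ)) = ∫ T, φ T ∂μ :=
      integral_map hφm.aemeasurable aestronglyMeasurable_id
    rw [h0]
    have hd : (∫ T, φ T ∂μ) = (∫ T, max (φ T) 0 ∂μ) - ∫ T, max (-φ T) 0 ∂μ := by
      rw [← integral_sub hpos hneg]
      exact integral_congr_ae (Eventually.of_forall fun T =>
        (max_zero_sub_max_neg_zero_eq_self (φ T)).symm)
    rw [hd, hEpos, hEneg, sub_self]
  -- the cdf
  have hcdf : ∀ x : ℝ, ((μ.map φ) (Set.Iic x)).toReal =
      if x ≤ -a then 0 else if x ≤ -t₀ then s (-x) - s a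
      else if x < a then 1 - s a else 1 - s x := by
    intro x
    rw [Measure.map_apply hφm measurableSet_Iic]
    by_cases h1 : x ≤ -a
    · rw [if_pos h1]
      have hset : φ ⁻¹' Set.Iic x ∩ Set.Ici 0 = (∅ : Set ℝ) ∩ Set.Ici 0 := by
        rw [Set.empty_inter]
        apply Set.eq_empty_iff_forall_notMem.mpr
        rintro T ⟨h2, h3⟩
        have h3' : (0:ℝ) ≤ T := h3
        have h2' : φ T ≤ x := h2
        by_cases h4 : T < a
        · rw [hφdef] at h2'; simp only [if_pos h4] at h2'; linarith
        · rw [hφdef] at h2'; simp only [if_neg h4] at h2'; linarith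
      rw [hnull _ _ hset, measure_empty]
      simp
    · by_cases h2 : x ≤ -t₀
      · rw [if_neg h1, if_pos h2]
        push_neg at h1
        have hset : φ ⁻¹' Set.Iic x ∩ Set.Ici 0 = Set.Ico (-x) a ∩ Set.Ici 0 := by
          ext T
          simp only [Set.mem_inter_iff, Set.mem_preimage, Set.mem_Iic, Set.mem_Ici, Set.mem_Ico]
          constructor
          · rintro ⟨hT, h3⟩
            by_cases h4 : T < a
            · rw [hφdef] at hT; simp only [if_pos h4] at hT
              exact ⟨⟨by linarith, h4⟩, h3⟩
            · rw [hφdef] at hT; simp only [if_neg h4] at hT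
              exact False.elim (by linarith)
          · rintro ⟨⟨h5, h6⟩, h3⟩
            refine ⟨?_, h3⟩
            rw [hφdef]; simp only [if_pos h6]; linarith
        rw [hnull _ _ hset, hμdef, StieltjesFunction.measure_Ico, hleft, hleft,
          hGpos a ha0.le, hGpos (-x) (by linarith)]
        rw [show (1 - s a) - (1 - s (-x)) = s (-x) - s a by ring]
        exact ENNReal.toReal_ofReal (by
          have := hmono (Set.mem_Ici.mpr (by linarith : (0:ℝ) ≤ -x))
            (Set.mem_Ici.mpr ha0.le) (by linarith : -x ≤ a)
          linarith)
      · by_cases h3 : x < a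
        · rw [if_neg h1, if_neg h2, if_pos h3]
          push_neg at h1 h2
          set c := max (-x) 0 with hc
          have hc0 : (0:ℝ) ≤ c := le_max_right _ _
          have hct : c ≤ t₀ := max_le (by linarith) ht₀
          have hsc : s c = 1 := hone c ⟨hc0, hct⟩
          have hset : φ ⁻¹' Set.Iic x ∩ Set.Ici 0 = Set.Ico c a ∩ Set.Ici 0 := by
            ext T
            simp only [Set.mem_inter_iff, Set.mem_preimage, Set.mem_Iic, Set.mem_Ici, Set.mem_Ico]
            constructor
            · rintro ⟨hT, hT0⟩
              by_cases h4 : T < a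
              · rw [hφdef] at hT; simp only [if_pos h4] at hT
                exact ⟨⟨max_le (by linarith) hT0, h4⟩, hT0⟩
              · rw [hφdef] at hT; simp only [if_neg h4] at hT
                exact False.elim (by linarith)
            · rintro ⟨⟨h5, h6⟩, hT0⟩
              refine ⟨?_, hT0⟩
              rw [hφdef]; simp only [if_pos h6]
              have h7 : -x ≤ c := le_max_left _ _
              linarith
          rw [hnull _ _ hset, hμdef, StieltjesFunction.measure_Ico, hleft, hleft,
            hGpos a ha0.le, hGpos c hc0, hsc]
          rw [show (1 - s a) - (1 - 1) = 1 - s a by ring]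
          exact ENNReal.toReal_ofReal (by linarith [(hs01 a (Set.mem_Ici.mpr ha0.le)).2])
        · rw [if_neg h1, if_neg h2, if_neg h3]
          push_neg at h1 h2 h3
          have hset : φ ⁻¹' Set.Iic x ∩ Set.Ici 0 = Set.Icc 0 x ∩ Set.Ici 0 := by
            ext T
            simp only [Set.mem_inter_iff, Set.mem_preimage, Set.mem_Iic, Set.mem_Ici, Set.mem_Icc]
            constructor
            · rintro ⟨hT, hT0⟩
              refine ⟨⟨hT0, ?_⟩, hT0⟩
              by_cases h4 : T < a
              · linarith
              · rw [hφdef] at hT; simpa only [if_neg h4] using hT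
            · rintro ⟨⟨hT0, hTx⟩, _⟩
              refine ⟨?_, hT0⟩
              rw [hφdef]
              by_cases h4 : T < a
              · simp only [if_pos h4]; linarith
              · simp only [if_neg h4]; exact hTx
          rw [hnull _ _ hset, hμdef, StieltjesFunction.measure_Icc, hleft,
            hGpos x (by linarith), hGneg 0 le_rfl, sub_zero]
          exact ENNReal.toReal_ofReal (by
            linarith [(hs01 x (Set.mem_Ici.mpr (by linarith : (0:ℝ) ≤ x))).2])
  refine ⟨μ.map φ, Measure.isProbabilityMeasure_map hφm.aemeasurable, hcdf, hXint, ?_, hmean, ?_⟩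
  · intro t ht
    rw [Measure.map_apply hφm (measurableSet_lt measurable_const continuous_abs.measurable)]
    rw [show φ ⁻¹' {x | t < |x|} = {T | t < |φ T|} from rfl, htailabs t ht,
      ENNReal.toReal_ofReal (hs01 t (Set.mem_Ici.mpr ht)).1]
  · intro u hu
    by_cases hua : u ≤ a
    · rw [if_pos hua, hSL u hu, hval2 u hu hua]
    · push_neg at hua
      rw [if_neg (not_le.mpr hua), hSL u hu, hval1 u hua.le]
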